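/- Let σ > 1, p ≥ 0 and δ > 0. Then sup_{T ∈ ℝ} ∫_{−δ}^{δ} |ζ(σ + i(T+t))|^p (δ − |t|) dt = ∫_{−δ}^{δ} |ζ(σ+it)|^p (δ − |t|) dt, and the same identity holds with the supremum replaced by limsup_{T → ∞}. -/

import Mathlib

open Complex Real Filter MeasureTheory intervalIntegral
set_option maxHeartbeats 1000000

namespace Stmt5

variable {ι : Type*} [Countable ι]

noncomputable def Fc (b : ι → ℝ) (ν : ι → ℝ) (θ : ℝ) : ℂ :=
  ∑' i, (b i : ℂ) * Complex.exp ((-(θ * ν i) : ℝ) * Complex.I)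

variable {b : ι → ℝ} {ν : ι → ℝ}

lemma norm_term (hb : ∀ i, 0 ≤ b i) (θ : ℝ) (i : ι) :
    ‖(b i : ℂ) * Complex.exp ((-(θ * ν i) : ℝ) * Complex.I)‖ = b i := by
  rw [norm_mul, Complex.norm_exp_ofReal_mul_I,
    Complex.norm_real, Real.norm_eq_abs, _root_.abs_of_nonneg (hb i), mul_one]

lemma summable_term (hb : ∀ i, 0 ≤ b i) (hsb : Summable b) (θ : ℝ) :
    Summable (fun i => (b i : ℂ) * Complex.exp ((-(θ * ν i) : ℝ) * Complex.I)) := by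
  apply Summable.of_norm
  simpa only [norm_term hb θ] using hsb

lemma Fc_continuous (hb : ∀ i, 0 ≤ b i) (hsb : Summable b) : Continuous (Fc b ν) := by
  apply continuous_tsum (u := b) _ hsb (fun i θ => le_of_eq (norm_term hb θ i))
  intro i
  fun_prop

lemma norm_Fc_le (hb : ∀ i, 0 ≤ b i) (hsb : Summable b) (θ : ℝ) : ‖Fc b ν θ‖ ≤ ∑' i, b i := by
  refine le_trans (norm_tsum_le_tsum_norm ?_) ?_
  · simpa only [norm_term hb θ] using hsb
  · exact le_of_eq (by simp only [norm_term hb θ])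

noncomputable def fsq (b : ι → ℝ) (ν : ι → ℝ) (θ : ℝ) : ℝ := ‖Fc b ν θ‖ ^ 2

lemma fsq_nonneg (θ : ℝ) : 0 ≤ fsq b ν θ := sq_nonneg _

lemma conj_term (r x : ℝ) :
    (starRingEnd ℂ) ((r : ℂ) * Complex.exp ((x : ℝ) * Complex.I)) =
      (r : ℂ) * Complex.exp ((-x : ℝ) * Complex.I) := by
  rw [map_mul, Complex.conj_ofReal, ← Complex.exp_conj]
  congr 2
  simp

lemma fsq_eq (hb : ∀ i, 0 ≤ b i) (hsb : Summable b) (θ : ℝ) :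
    fsq b ν θ = ∑' q : ι × ι, (b q.1 * b q.2) * Real.cos (θ * (ν q.1 - ν q.2)) := by
  have hnorm2 : ∀ q : ι × ι, ‖((b q.1 * b q.2 : ℝ) : ℂ) *
      Complex.exp ((-(θ * (ν q.1 - ν q.2)) : ℝ) * Complex.I)‖ = b q.1 * b q.2 := by
    intro q
    rw [norm_mul, Complex.norm_exp_ofReal_mul_I,
      Complex.norm_real, Real.norm_eq_abs,
      _root_.abs_of_nonneg (mul_nonneg (hb _) (hb _)), mul_one]
  have hsprod : Summable (fun q : ι × ι => b q.1 * b q.2) := hsb.mul_of_nonneg hsb hb hb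
  have h1 : (starRingEnd ℂ) (Fc b ν θ) =
      ∑' i, (b i : ℂ) * Complex.exp ((θ * ν i : ℝ) * Complex.I) := by
    rw [Fc, show (starRingEnd ℂ) (∑' i, (b i : ℂ) * Complex.exp ((-(θ * ν i) : ℝ) * Complex.I)) =
      star (∑' i, (b i : ℂ) * Complex.exp ((-(θ * ν i) : ℝ) * Complex.I)) from rfl, tsum_star]
    congr 1
    funext i
    rw [show (star ((b i : ℂ) * Complex.exp ((-(θ * ν i) : ℝ) * Complex.I)) : ℂ) =
      (starRingEnd ℂ) ((b i : ℂ) * Complex.exp ((-(θ * ν i) : ℝ) * Complex.I)) from rfl,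
      conj_term]
    norm_num
  have hg2 : Summable (fun i => ‖(b i : ℂ) * Complex.exp ((θ * ν i : ℝ) * Complex.I)‖) := by
    have : ∀ i, ‖(b i : ℂ) * Complex.exp ((θ * ν i : ℝ) * Complex.I)‖ = b i := by
      intro i
      rw [norm_mul, Complex.norm_exp_ofReal_mul_I,
        Complex.norm_real, Real.norm_eq_abs, _root_.abs_of_nonneg (hb i), mul_one]
    simpa only [this] using hsb
  have h2 : Fc b ν θ * (starRingEnd ℂ) (Fc b ν θ) =
      ∑' q : ι × ι, ((b q.1 * b q.2 : ℝ) : ℂ) *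
        Complex.exp ((-(θ * (ν q.1 - ν q.2)) : ℝ) * Complex.I) := by
    rw [h1, Fc, tsum_mul_tsum_of_summable_norm (by simpa only [norm_term hb θ] using hsb) hg2]
    congr 1
    funext q
    rw [mul_mul_mul_comm, ← Complex.exp_add, ← add_mul, ← Complex.ofReal_add]
    norm_cast
    congr 3
    ring
  have h3 : fsq b ν θ = (Fc b ν θ * (starRingEnd ℂ) (Fc b ν θ)).re := by
    rw [Complex.mul_conj]
    simp [fsq, Complex.sq_norm]
  rw [h3, h2, Complex.re_tsum (Summable.of_norm (by simpa only [hnorm2] using hsprod))]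
  congr 1
  funext q
  rw [Complex.re_ofReal_mul, Complex.exp_ofReal_mul_I_re, Real.cos_neg]

variable {δ : ℝ}

noncomputable def Kv (δ l : ℝ) : ℝ := ∫ t in (-δ)..δ, Real.cos (l * t) * (δ - |t|)

lemma kern_intble (a b T l : ℝ) :
    IntervalIntegrable (fun t => Real.cos (l * (T + t)) * (δ - |t|)) volume a b := by
  apply Continuous.intervalIntegrable
  fun_prop

lemma odd_part (l : ℝ) : (∫ t in (-δ)..δ, Real.sin (l * t) * (δ - |t|)) = 0 := by
  have h := intervalIntegral.integral_comp_neg (a := -δ) (b := δ)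
    (fun t => Real.sin (l * t) * (δ - |t|))
  simp only [neg_neg] at h
  have h2 : ∀ t : ℝ, Real.sin (l * -t) * (δ - |-t|) = -(Real.sin (l * t) * (δ - |t|)) := by
    intro t
    rw [mul_neg, Real.sin_neg, abs_neg]
    ring
  rw [funext h2] at h
  rw [intervalIntegral.integral_neg] at h
  linarith

lemma Kv_shift (l T : ℝ) :
    (∫ t in (-δ)..δ, Real.cos (l * (T + t)) * (δ - |t|)) = Real.cos (l * T) * Kv δ l := by
  have h : ∀ t : ℝ, Real.cos (l * (T + t)) * (δ - |t|) =
      Real.cos (l * T) * (Real.cos (l * t) * (δ - |t|)) -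
        Real.sin (l * T) * (Real.sin (l * t) * (δ - |t|)) := by
    intro t
    rw [mul_add, Real.cos_add]
    ring
  rw [funext h, intervalIntegral.integral_sub, intervalIntegral.integral_const_mul,
    intervalIntegral.integral_const_mul, odd_part, Kv]
  · ring
  · apply Continuous.intervalIntegrable; fun_prop
  · apply Continuous.intervalIntegrable; fun_prop

lemma Kv_nonneg (hδ : 0 < δ) (l : ℝ) : 0 ≤ Kv δ l := by
  rcases eq_or_ne l 0 with rfl | hl
  · rw [Kv]
    simp only [zero_mul, Real.cos_zero, one_mul]
    apply intervalIntegral.integral_nonneg (by linarith)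
    intro t ht
    rw [Set.mem_Icc] at ht
    rw [sub_nonneg, abs_le]
    constructor <;> linarith [ht.1, ht.2]
  · have key : ∀ (c : ℝ), c ∈ Set.uIcc (0:ℝ) δ → True := fun _ _ => trivial
    -- split the integral at 0
    have i1 : IntervalIntegrable (fun t => Real.cos (l * t) * (δ - |t|)) volume (-δ) 0 := by
      apply Continuous.intervalIntegrable; fun_prop
    have i2 : IntervalIntegrable (fun t => Real.cos (l * t) * (δ - |t|)) volume 0 δ := by
      apply Continuous.intervalIntegrable; fun_prop
    have hsplit := intervalIntegral.integral_add_adjacent_intervals i1 i2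
    -- left piece
    have hL : (∫ t in (-δ)..(0:ℝ), Real.cos (l * t) * (δ - |t|)) =
        (1 - Real.cos (l * δ)) / l ^ 2 := by
      have hcong : Set.EqOn (fun t => Real.cos (l * t) * (δ - |t|))
          (fun t => Real.cos (l * t) * (δ + t)) (Set.uIcc (-δ) 0) := by
        intro t ht
        rw [Set.uIcc_of_le (by linarith : -δ ≤ (0:ℝ)), Set.mem_Icc] at ht
        simp only
        rw [abs_of_nonpos ht.2]
        ring
      rw [intervalIntegral.integral_congr hcong]
      have hderiv : ∀ t ∈ Set.uIcc (-δ) (0:ℝ),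
          HasDerivAt (fun t => (δ + t) * Real.sin (l * t) / l + Real.cos (l * t) / l ^ 2)
            (Real.cos (l * t) * (δ + t)) t := by
        intro t _
        have h1 : HasDerivAt (fun t : ℝ => l * t) l t := by
          simpa using (hasDerivAt_id t).const_mul l
        have hs : HasDerivAt (fun t : ℝ => Real.sin (l * t)) (Real.cos (l * t) * l) t :=
          (Real.hasDerivAt_sin (l * t)).comp t h1
        have hc : HasDerivAt (fun t : ℝ => Real.cos (l * t)) (-Real.sin (l * t) * l) t :=
          (Real.hasDerivAt_cos (l * t)).comp t h1
        have hid : HasDerivAt (fun t : ℝ => δ + t) 1 t := by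
          simpa using (hasDerivAt_id t).const_add δ
        have := ((hid.mul hs).div_const l).add (hc.div_const (l ^ 2))
        refine this.congr_deriv ?_
        field_simp
        ring
      rw [intervalIntegral.integral_eq_sub_of_hasDerivAt hderiv
        (by apply Continuous.intervalIntegrable; fun_prop)]
      simp only [mul_zero, Real.sin_zero, Real.cos_zero, add_zero, zero_mul, zero_div]
      rw [mul_neg, Real.sin_neg, Real.cos_neg, add_neg_cancel]
      field_simp
      ring
    -- right piece
    have hR : (∫ t in (0:ℝ)..δ, Real.cos (l * t) * (δ - |t|)) =
        (1 - Real.cos (l * δ)) / l ^ 2 := by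
      have hcong : Set.EqOn (fun t => Real.cos (l * t) * (δ - |t|))
          (fun t => Real.cos (l * t) * (δ - t)) (Set.uIcc 0 δ) := by
        intro t ht
        rw [Set.uIcc_of_le (by linarith : (0:ℝ) ≤ δ), Set.mem_Icc] at ht
        simp only
        rw [_root_.abs_of_nonneg ht.1]
      rw [intervalIntegral.integral_congr hcong]
      have hderiv : ∀ t ∈ Set.uIcc (0:ℝ) δ,
          HasDerivAt (fun t => (δ - t) * Real.sin (l * t) / l - Real.cos (l * t) / l ^ 2)
            (Real.cos (l * t) * (δ - t)) t := by
        intro t _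
        have h1 : HasDerivAt (fun t : ℝ => l * t) l t := by
          simpa using (hasDerivAt_id t).const_mul l
        have hs : HasDerivAt (fun t : ℝ => Real.sin (l * t)) (Real.cos (l * t) * l) t :=
          (Real.hasDerivAt_sin (l * t)).comp t h1
        have hc : HasDerivAt (fun t : ℝ => Real.cos (l * t)) (-Real.sin (l * t) * l) t :=
          (Real.hasDerivAt_cos (l * t)).comp t h1
        have hid : HasDerivAt (fun t : ℝ => δ - t) (-1) t := by
          exact (hasDerivAt_id' t).const_sub δ
        have := ((hid.mul hs).div_const l).sub (hc.div_const (l ^ 2))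
        refine this.congr_deriv ?_
        field_simp
        ring
      rw [intervalIntegral.integral_eq_sub_of_hasDerivAt hderiv
        (by apply Continuous.intervalIntegrable; fun_prop)]
      simp only [mul_zero, Real.sin_zero, Real.cos_zero, sub_zero, zero_mul, zero_div]
      rw [sub_self, zero_mul, zero_div]
      field_simp
      ring
    rw [Kv, ← hsplit, hL, hR]
    have : Real.cos (l * δ) ≤ 1 := Real.cos_le_one _
    have h2 : (0:ℝ) < l ^ 2 := by positivity
    have h3 : 0 ≤ (1 - Real.cos (l * δ)) / l ^ 2 := div_nonneg (by linarith) h2.le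
    linarith

variable {δ : ℝ}

noncomputable def Iv (b : ι → ℝ) (ν : ι → ℝ) (δ : ℝ) (T : ℝ) : ℝ :=
  ∫ t in (-δ)..δ, fsq b ν (T + t) * (δ - |t|)

lemma Iv_hasSum (hb : ∀ i, 0 ≤ b i) (hsb : Summable b) (hδ : 0 < δ) (T : ℝ) :
    HasSum (fun q : ι × ι => (b q.1 * b q.2) *
      (Real.cos ((ν q.1 - ν q.2) * T) * Kv δ (ν q.1 - ν q.2))) (Iv b ν δ T) := by
  set g : ι × ι → C(ℝ, ℝ) := fun q =>
    ⟨fun t => (b q.1 * b q.2) * (Real.cos ((T + t) * (ν q.1 - ν q.2)) * (δ - |t|)), by fun_prop⟩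
    with hg
  have hnorm : ∀ q : ι × ι, ‖(g q).restrict
      (⟨Set.uIcc (-δ) δ, isCompact_uIcc⟩ : TopologicalSpace.Compacts ℝ)‖ ≤
      (b q.1 * b q.2) * δ := by
    intro q
    rw [ContinuousMap.norm_le _ (mul_nonneg (mul_nonneg (hb _) (hb _)) hδ.le)]
    rintro ⟨t, ht⟩
    have ht' : -δ ≤ t ∧ t ≤ δ := by
      have : t ∈ Set.Icc (-δ) δ := by
        simpa [Set.uIcc_of_le (by linarith : -δ ≤ δ)] using ht
      exact this
    simp only [ContinuousMap.restrict_apply, hg, ContinuousMap.coe_mk]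
    rw [Real.norm_eq_abs, abs_mul, abs_mul, _root_.abs_of_nonneg (hb q.1),
      _root_.abs_of_nonneg (hb q.2), abs_mul]
    have h1 : |Real.cos ((T + t) * (ν q.1 - ν q.2))| ≤ 1 := Real.abs_cos_le_one _
    have h2 : _root_.abs (δ - _root_.abs t) ≤ δ := by
      have h3 : _root_.abs t ≤ δ := abs_le.mpr ht'
      have h4 := abs_nonneg t
      rw [abs_le]
      constructor <;> linarith
    have h5 : |Real.cos ((T + t) * (ν q.1 - ν q.2))| * _root_.abs (δ - _root_.abs t) ≤ 1 * δ :=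
      mul_le_mul h1 h2 (abs_nonneg _) zero_le_one
    nlinarith [mul_nonneg (hb q.1) (hb q.2)]
  have hsum : Summable (fun q : ι × ι => ‖(g q).restrict
      (⟨Set.uIcc (-δ) δ, isCompact_uIcc⟩ : TopologicalSpace.Compacts ℝ)‖) := by
    apply Summable.of_nonneg_of_le (fun q => norm_nonneg _) hnorm
    exact (hsb.mul_of_nonneg hsb hb hb).mul_right δ
  have H := intervalIntegral.hasSum_intervalIntegral_of_summable_norm (a := -δ) (b := δ) hsum
  have heval : ∀ q : ι × ι, (∫ t in (-δ)..δ, (g q) t) =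
      (b q.1 * b q.2) * (Real.cos ((ν q.1 - ν q.2) * T) * Kv δ (ν q.1 - ν q.2)) := by
    intro q
    simp only [hg, ContinuousMap.coe_mk]
    rw [intervalIntegral.integral_const_mul]
    congr 1
    have : ∀ t : ℝ, Real.cos ((T + t) * (ν q.1 - ν q.2)) * (δ - |t|) =
        Real.cos ((ν q.1 - ν q.2) * (T + t)) * (δ - |t|) := by
      intro t; rw [mul_comm (T + t)]
    rw [funext this, Kv_shift, mul_comm (ν q.1 - ν q.2) T]
  have htsum : ∀ t : ℝ, (∑' q : ι × ι, (g q) t) = fsq b ν (T + t) * (δ - |t|) := by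
    intro t
    simp only [hg, ContinuousMap.coe_mk]
    rw [fsq_eq hb hsb, ← tsum_mul_right]
    congr 1
    funext q
    ring
  have hIv : Iv b ν δ T = ∫ t in (-δ)..δ, ∑' q : ι × ι, (g q) t := by
    rw [Iv]
    apply intervalIntegral.integral_congr
    intro t _
    exact ((htsum t).symm : _)
  rw [hIv]
  refine H.congr_fun (fun q => ?_)
  exact (heval q).symm

lemma Iv_le (hb : ∀ i, 0 ≤ b i) (hsb : Summable b) (hδ : 0 < δ) (T : ℝ) :
    Iv b ν δ T ≤ Iv b ν δ 0 := by
  have h0 := Iv_hasSum hb hsb hδ (ν := ν) 0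
  have hT := Iv_hasSum hb hsb hδ (ν := ν) T
  refine hasSum_le (fun q => ?_) hT h0
  have h1 : Real.cos ((ν q.1 - ν q.2) * T) ≤ 1 := Real.cos_le_one _
  have h2 : 0 ≤ Kv δ (ν q.1 - ν q.2) := Kv_nonneg hδ _
  have h3 : 0 ≤ b q.1 * b q.2 := mul_nonneg (hb _) (hb _)
  rw [mul_zero, Real.cos_zero]
  apply mul_le_mul_of_nonneg_left _ h3
  apply mul_le_mul_of_nonneg_right h1 h2

lemma fsq_continuous (hb : ∀ i, 0 ≤ b i) (hsb : Summable b) : Continuous (fsq b ν) := by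
  unfold fsq
  exact ((Fc_continuous hb hsb).norm).pow 2

lemma fsq_diff (hb : ∀ i, 0 ≤ b i) (hsb : Summable b) (x y : ℝ) :
    |fsq b ν x - fsq b ν y| ≤ ‖Fc b ν x - Fc b ν y‖ * (2 * ∑' i, b i) := by
  set B := ∑' i, b i
  have h1 : ‖Fc b ν x‖ ≤ B := norm_Fc_le hb hsb x
  have h2 : ‖Fc b ν y‖ ≤ B := norm_Fc_le hb hsb y
  have h3 : |‖Fc b ν x‖ - ‖Fc b ν y‖| ≤ ‖Fc b ν x - Fc b ν y‖ := abs_norm_sub_norm_le _ _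
  have h4 : 0 ≤ ‖Fc b ν x‖ := norm_nonneg _
  have h5 : 0 ≤ ‖Fc b ν y‖ := norm_nonneg _
  rw [fsq, fsq]
  rw [show ‖Fc b ν x‖ ^ 2 - ‖Fc b ν y‖ ^ 2 =
    (‖Fc b ν x‖ - ‖Fc b ν y‖) * (‖Fc b ν x‖ + ‖Fc b ν y‖) from by ring, abs_mul,
    _root_.abs_of_nonneg (by linarith : (0:ℝ) ≤ ‖Fc b ν x‖ + ‖Fc b ν y‖)]
  have h6 : 0 ≤ ‖Fc b ν x - Fc b ν y‖ := norm_nonneg _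
  nlinarith

lemma Iv_ge (hb : ∀ i, 0 ≤ b i) (hsb : Summable b) (hδ : 0 < δ) (T : ℝ) {ε : ℝ}
    (hfs : ∀ t : ℝ, |fsq b ν (T + t) - fsq b ν (0 + t)| ≤ ε) :
    Iv b ν δ 0 - Iv b ν δ T ≤ ε * δ * (2 * δ) := by
  have hcont := fsq_continuous (ν := ν) hb hsb
  have i1 : IntervalIntegrable (fun t => fsq b ν (0 + t) * (δ - |t|)) volume (-δ) δ := by
    apply Continuous.intervalIntegrable; fun_prop
  have i2 : IntervalIntegrable (fun t => fsq b ν (T + t) * (δ - |t|)) volume (-δ) δ := by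
    apply Continuous.intervalIntegrable; fun_prop
  rw [Iv, Iv, ← intervalIntegral.integral_sub i1 i2]
  have hle : ∀ t ∈ Set.Icc (-δ) δ,
      fsq b ν (0 + t) * (δ - |t|) - fsq b ν (T + t) * (δ - |t|) ≤ ε * δ := by
    intro t ht
    rw [Set.mem_Icc] at ht
    have hy0 : 0 ≤ δ - |t| := by
      have : |t| ≤ δ := abs_le.mpr ht
      linarith
    have hyδ : δ - |t| ≤ δ := by
      have := abs_nonneg t
      linarith
    have hx : fsq b ν (0 + t) - fsq b ν (T + t) ≤ ε := by
      have := hfs t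
      have := abs_le.mp this
      linarith [this.2]
    calc fsq b ν (0 + t) * (δ - |t|) - fsq b ν (T + t) * (δ - |t|)
        = (fsq b ν (0 + t) - fsq b ν (T + t)) * (δ - |t|) := by ring
      _ ≤ ε * δ := by
          rcases le_or_gt (fsq b ν (0 + t) - fsq b ν (T + t)) 0 with h | h
          · have hεnn : 0 ≤ ε := le_trans (abs_nonneg _) (hfs t)
            have : (fsq b ν (0 + t) - fsq b ν (T + t)) * (δ - |t|) ≤ 0 :=
              mul_nonpos_of_nonpos_of_nonneg h hy0
            nlinarith
          · nlinarith
  calc (∫ t in (-δ)..δ, (fsq b ν (0 + t) * (δ - |t|) - fsq b ν (T + t) * (δ - |t|)))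
      ≤ ∫ _t in (-δ)..δ, ε * δ := by
        apply intervalIntegral.integral_mono_on (by linarith) _ (by simp) hle
        exact (i1.sub i2)
    _ = ε * δ * (2 * δ) := by
        rw [intervalIntegral.integral_const, smul_eq_mul]
        ring

lemma exists_good_T (hb : ∀ i, 0 ≤ b i) (hsb : Summable b) {ε : ℝ} (hε : 0 < ε) (M : ℝ) :
    ∃ T : ℝ, M ≤ T ∧ ∀ θ : ℝ, ‖Fc b ν (T + θ) - Fc b ν θ‖ ≤ ε := by
  set B := ∑' i, b i with hB
  have hB0 : 0 ≤ B := tsum_nonneg hb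
  set ε₄ : ℝ := ε / (4 * (B + 1)) with hε₄
  have hε₄0 : 0 < ε₄ := by positivity
  -- tail cut
  obtain ⟨S, hS⟩ : ∃ S : Finset ι, ‖∑' i : {x // x ∉ S}, b i‖ < ε / 8 := by
    have h := NormedAddCommGroup.tendsto_nhds_zero.mp (tendsto_tsum_compl_atTop_zero b)
      (ε / 8) (by positivity)
    exact h.exists
  have htail : (∑' i : {x : ι // x ∉ S}, b i) < ε / 8 := by
    calc (∑' i : {x : ι // x ∉ S}, b i) ≤ ‖∑' i : {x : ι // x ∉ S}, b i‖ := le_norm_self _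
      _ < ε / 8 := hS
  -- pigeonhole on the torus (↥S → ℂ)
  obtain ⟨T, hTM, hTnear⟩ : ∃ T : ℝ, M ≤ T ∧ ∀ i ∈ S,
      ‖Complex.exp ((-(T * ν i) : ℝ) * Complex.I) - 1‖ ≤ ε₄ := by
    set gS : ℕ → (↥S → ℂ) := fun m i => Complex.exp ((-((m : ℝ) * ν i) : ℝ) * Complex.I)
      with hgS
    have hmem : ∀ m, gS m ∈ Metric.closedBall (0 : ↥S → ℂ) 1 := by
      intro m
      rw [Metric.mem_closedBall, dist_zero_right]
      rw [pi_norm_le_iff_of_nonneg zero_le_one]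
      intro i
      rw [hgS]
      simp only
      rw [Complex.norm_exp_ofReal_mul_I]
    obtain ⟨a, -, φ, hφ, hconv⟩ :=
      tendsto_subseq_of_bounded Metric.isBounded_closedBall hmem
    have hcauchy : CauchySeq (gS ∘ φ) := hconv.cauchySeq
    rw [Metric.cauchySeq_iff'] at hcauchy
    obtain ⟨N, hN⟩ := hcauchy ε₄ hε₄0
    -- choose n large
    set n : ℕ := N + Nat.ceil (max M 0) + φ N with hn
    have hnN : N ≤ n := by omega
    have hφn : φ N + Nat.ceil (max M 0) ≤ φ n := by
      have h1 : n ≤ φ n := StrictMono.le_apply hφ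
      omega
    refine ⟨((φ n - φ N : ℕ) : ℝ), ?_, ?_⟩
    · have h2 : (Nat.ceil (max M 0) : ℝ) ≤ ((φ n - φ N : ℕ) : ℝ) := by
        have : Nat.ceil (max M 0) ≤ φ n - φ N := by omega
        exact_mod_cast this
      have h3 : M ≤ (Nat.ceil (max M 0) : ℝ) :=
        le_trans (le_max_left M 0) (Nat.le_ceil _)
      linarith
    · intro i hi
      have hd := hN n hnN
      have hdi : dist ((gS ∘ φ) n ⟨i, hi⟩) ((gS ∘ φ) N ⟨i, hi⟩) ≤ ε₄ :=
        le_trans (dist_le_pi_dist _ _ _) hd.le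
      rw [Function.comp_apply, Function.comp_apply, hgS, dist_eq_norm] at hdi
      simp only at hdi
      have hkey : Complex.exp ((-(((φ n - φ N : ℕ) : ℝ) * ν i) : ℝ) * Complex.I) - 1 =
          Complex.exp (((φ N : ℝ) * ν i : ℝ) * Complex.I) *
            (Complex.exp ((-((φ n : ℝ) * ν i) : ℝ) * Complex.I) -
             Complex.exp ((-((φ N : ℝ) * ν i) : ℝ) * Complex.I)) := by
        rw [mul_sub, ← Complex.exp_add, ← Complex.exp_add]
        have hc : ((φ n - φ N : ℕ) : ℝ) = (φ n : ℝ) - (φ N : ℝ) := by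
          have : φ N ≤ φ n := hφ.monotone hnN
          push_cast [Nat.cast_sub this]
          ring
        rw [hc]
        congr 1
        · rw [← add_mul, ← Complex.ofReal_add]
          congr 2
          push_cast
          ring
        · rw [← add_mul, ← Complex.ofReal_add]
          norm_num
      rw [hkey, norm_mul, Complex.norm_exp_ofReal_mul_I,
        one_mul]
      exact hdi
  -- assemble
  refine ⟨T, hTM, fun θ => ?_⟩
  set w : ι → ℝ := fun i => ‖Complex.exp ((-(T * ν i) : ℝ) * Complex.I) - 1‖ with hw
  have hw2 : ∀ i, w i ≤ 2 := by
    intro i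
    rw [hw]
    simp only
    calc ‖Complex.exp ((-(T * ν i) : ℝ) * Complex.I) - 1‖
        ≤ ‖Complex.exp ((-(T * ν i) : ℝ) * Complex.I)‖ + ‖(1:ℂ)‖ := norm_sub_le _ _
      _ = 2 := by
          rw [Complex.norm_exp_ofReal_mul_I, norm_one]
          norm_num
  have hw0 : ∀ i, 0 ≤ w i := fun i => norm_nonneg _
  -- difference as a tsum
  have hdiff : Fc b ν (T + θ) - Fc b ν θ =
      ∑' i, (b i : ℂ) * Complex.exp ((-(θ * ν i) : ℝ) * Complex.I) *
        (Complex.exp ((-(T * ν i) : ℝ) * Complex.I) - 1) := by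
    rw [Fc, Fc, ← (summable_term hb hsb _).tsum_sub (summable_term hb hsb _)]
    congr 1
    funext i
    rw [mul_sub, mul_one, mul_assoc, ← Complex.exp_add, ← add_mul, ← Complex.ofReal_add]
    rw [sub_left_inj]
    congr 3
    ring
  have hsummw : Summable (fun i => b i * w i) := by
    apply Summable.of_nonneg_of_le (fun i => mul_nonneg (hb i) (hw0 i))
      (fun i => mul_le_mul_of_nonneg_left (hw2 i) (hb i))
    exact hsb.mul_right 2
  have hnorm : ‖Fc b ν (T + θ) - Fc b ν θ‖ ≤ ∑' i, b i * w i := by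
    rw [hdiff]
    refine le_trans (norm_tsum_le_tsum_norm ?_) (le_of_eq ?_)
    · apply Summable.of_nonneg_of_le (fun i => norm_nonneg _) _ hsummw
      intro i
      rw [norm_mul, norm_mul, Complex.norm_real (b i), Real.norm_eq_abs,
        _root_.abs_of_nonneg (hb i), 
        Complex.norm_exp_ofReal_mul_I, mul_one]
    · congr 1
      funext i
      rw [norm_mul, norm_mul, Complex.norm_real (b i), Real.norm_eq_abs,
        _root_.abs_of_nonneg (hb i), 
        Complex.norm_exp_ofReal_mul_I, mul_one]
  -- split the tsum
  have hsplit := hsummw.sum_add_tsum_compl (s := S)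
  have hSsum : (∑ i ∈ S, b i * w i) ≤ B * ε₄ := by
    calc (∑ i ∈ S, b i * w i) ≤ ∑ i ∈ S, b i * ε₄ := by
          apply Finset.sum_le_sum
          intro i hi
          exact mul_le_mul_of_nonneg_left (hTnear i hi) (hb i)
      _ = (∑ i ∈ S, b i) * ε₄ := by rw [Finset.sum_mul]
      _ ≤ B * ε₄ := by
          apply mul_le_mul_of_nonneg_right _ hε₄0.le
          exact hsb.sum_le_tsum S (fun i _ => hb i)
  have hcompl : (∑' i : ↑((S : Set ι))ᶜ, b (i : ι) * w (i : ι)) ≤ 2 * (ε / 8) := by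
    have h1 : (∑' i : ↑((S : Set ι))ᶜ, b (i : ι) * w (i : ι)) ≤
        ∑' i : ↑((S : Set ι))ᶜ, 2 * b (i : ι) := by
      apply (hsummw.subtype _).tsum_le_tsum _ ((hsb.subtype _).mul_left 2)
      intro i
      show b (i : ι) * w (i : ι) ≤ 2 * b (i : ι)
      have h := mul_le_mul_of_nonneg_left (hw2 (i : ι)) (hb (i : ι))
      linarith
    have h2 : (∑' i : ↑((S : Set ι))ᶜ, 2 * b (i : ι)) = 2 * ∑' i : ↑((S : Set ι))ᶜ, b (i : ι) :=
      tsum_mul_left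
    have h3 : (∑' i : ↑((S : Set ι))ᶜ, b (i : ι)) = ∑' i : {x : ι // x ∉ S}, b (i : ι) := rfl
    rw [h2, h3] at h1
    linarith
  have hBε : B * ε₄ ≤ ε / 4 := by
    have h1 : B * ε₄ = (ε / 4) * (B / (B + 1)) := by
      rw [hε₄]
      field_simp
    have h2 : B / (B + 1) ≤ 1 := by
      rw [div_le_one (by linarith)]
      linarith
    have h3 : (0:ℝ) ≤ ε / 4 := by positivity
    rw [h1]
    nlinarith
  calc ‖Fc b ν (T + θ) - Fc b ν θ‖ ≤ ∑' i, b i * w i := hnorm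
    _ = (∑ i ∈ S, b i * w i) + ∑' i : ↑((S : Set ι))ᶜ, b (i : ι) * w (i : ι) := hsplit.symm
    _ ≤ ε / 4 + 2 * (ε / 8) := by linarith
    _ ≤ ε := by linarith

lemma Iv_freq (hb : ∀ i, 0 ≤ b i) (hsb : Summable b) (hδ : 0 < δ) {ε : ℝ} (hε : 0 < ε)
    (M : ℝ) : ∃ T : ℝ, M ≤ T ∧ Iv b ν δ 0 - ε ≤ Iv b ν δ T := by
  set B := ∑' i, b i with hB
  have hB0 : 0 ≤ B := tsum_nonneg hb
  set η : ℝ := ε / (2 * B * δ * (2 * δ) + 1) with hη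
  have hd : (0:ℝ) < 2 * B * δ * (2 * δ) + 1 := by positivity
  have hη0 : 0 < η := by positivity
  obtain ⟨T, hTM, hT⟩ := exists_good_T (ν := ν) hb hsb hη0 M
  refine ⟨T, hTM, ?_⟩
  have hfs : ∀ t : ℝ, |fsq b ν (T + t) - fsq b ν (0 + t)| ≤ η * (2 * B) := by
    intro t
    have h1 := fsq_diff (ν := ν) hb hsb (T + t) (0 + t)
    have h2 : ‖Fc b ν (T + t) - Fc b ν (0 + t)‖ ≤ η := by
      rw [zero_add]
      exact hT t
    calc |fsq b ν (T + t) - fsq b ν (0 + t)|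
        ≤ ‖Fc b ν (T + t) - Fc b ν (0 + t)‖ * (2 * B) := h1
      _ ≤ η * (2 * B) := mul_le_mul_of_nonneg_right h2 (by linarith)
  have h3 := Iv_ge hb hsb hδ T hfs
  have h4 : η * (2 * B) * δ * (2 * δ) ≤ ε := by
    rw [hη]
    rw [div_mul_eq_mul_div, div_mul_eq_mul_div, div_mul_eq_mul_div, div_le_iff₀ hd]
    nlinarith
  linarith

lemma abstract_conclusion (hb : ∀ i, 0 ≤ b i) (hsb : Summable b) (hδ : 0 < δ) :
    (⨆ T : ℝ, ((Iv b ν δ T : ℝ) : EReal)) = ((Iv b ν δ 0 : ℝ) : EReal) ∧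
      Filter.limsup (fun T : ℝ => ((Iv b ν δ T : ℝ) : EReal)) Filter.atTop =
        ((Iv b ν δ 0 : ℝ) : EReal) := by
  have hle : ∀ T : ℝ, ((Iv b ν δ T : ℝ) : EReal) ≤ ((Iv b ν δ 0 : ℝ) : EReal) := by
    intro T
    exact_mod_cast Iv_le hb hsb hδ T
  constructor
  · apply le_antisymm
    · exact iSup_le hle
    · exact le_iSup (fun T : ℝ => ((Iv b ν δ T : ℝ) : EReal)) 0
  · set L := Filter.limsup (fun T : ℝ => ((Iv b ν δ T : ℝ) : EReal)) Filter.atTop with hL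
    have hbdd : Filter.IsBoundedUnder (· ≤ ·) Filter.atTop
        (fun T : ℝ => ((Iv b ν δ T : ℝ) : EReal)) :=
      Filter.isBoundedUnder_of ⟨((Iv b ν δ 0 : ℝ) : EReal), hle⟩
    have hup : L ≤ ((Iv b ν δ 0 : ℝ) : EReal) :=
      Filter.limsup_le_of_le (by isBoundedDefault) (Filter.Eventually.of_forall hle)
    have hlow : ∀ ε : ℝ, 0 < ε → (((Iv b ν δ 0 - ε : ℝ)) : EReal) ≤ L := by
      intro ε hε
      apply Filter.le_limsup_of_frequently_le _ hbdd
      rw [Filter.frequently_atTop]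
      intro M
      obtain ⟨T, hTM, hT⟩ := Iv_freq (ν := ν) hb hsb hδ hε M
      exact ⟨T, hTM, by exact_mod_cast hT⟩
    have hnbot : L ≠ ⊥ := by
      intro h
      have := hlow 1 one_pos
      rw [h] at this
      exact (EReal.bot_lt_coe _).not_ge this
    have hntop : L ≠ ⊤ := by
      intro h
      rw [h] at hup
      exact (EReal.coe_lt_top _).not_ge hup
    have hLcoe : L = ((L.toReal : ℝ) : EReal) := (EReal.coe_toReal hntop hnbot).symm
    rw [hLcoe] at hup hlow ⊢
    rw [EReal.coe_eq_coe_iff]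
    have h1 : L.toReal ≤ Iv b ν δ 0 := EReal.coe_le_coe_iff.mp hup
    have h2 : Iv b ν δ 0 ≤ L.toReal := by
      apply le_of_forall_pos_le_add
      intro ε hε
      have := EReal.coe_le_coe_iff.mp (hlow ε hε)
      linarith
    linarith

section PowTsum

variable {η : Type*}

lemma pow_tsum (g : η → ℂ) (hg : Summable (fun i => ‖g i‖)) (k : ℕ) :
    Summable (fun v : Fin k → η => ∏ j, ‖g (v j)‖) ∧
      (∑' v : Fin k → η, ∏ j, ‖g (v j)‖) = (∑' i, ‖g i‖) ^ k ∧
      (∑' i, g i) ^ k = ∑' v : Fin k → η, ∏ j, g (v j) := by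
  induction k with
  | zero =>
    haveI hU : Unique (Fin 0 → η) := ⟨⟨fun j => j.elim0⟩, fun v => funext fun j => j.elim0⟩
    have h1 : HasSum (fun v : Fin 0 → η => ∏ j, ‖g (v j)‖) 1 := by
      have := hasSum_single (f := fun v : Fin 0 → η => ∏ j, ‖g (v j)‖) default
        (fun v hv => absurd (Subsingleton.elim v default) hv)
      simpa using this
    have h2 : HasSum (fun v : Fin 0 → η => ∏ j, g (v j)) 1 := by
      have := hasSum_single (f := fun v : Fin 0 → η => ∏ j, g (v j)) default
        (fun v hv => absurd (Subsingleton.elim v default) hv)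
      simpa using this
    exact ⟨h1.summable, by rw [h1.tsum_eq, pow_zero], by rw [h2.tsum_eq, pow_zero]⟩
  | succ k ih =>
    obtain ⟨ihS, ihR, ihC⟩ := ih
    set e : (η × (Fin k → η)) ≃ (Fin (k + 1) → η) := Fin.consEquiv (fun _ => η) with he
    have hterm : ∀ x : η × (Fin k → η),
        (∏ j, ‖g ((e x) j)‖) = ‖g x.1‖ * ∏ j, ‖g (x.2 j)‖ := by
      rintro ⟨a, v⟩
      rw [Fin.prod_univ_succ]
      simp [he, Fin.consEquiv]
    have htermC : ∀ x : η × (Fin k → η),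
        (∏ j, g ((e x) j)) = g x.1 * ∏ j, g (x.2 j) := by
      rintro ⟨a, v⟩
      rw [Fin.prod_univ_succ]
      simp [he, Fin.consEquiv]
    have hprod : Summable (fun x : η × (Fin k → η) => ‖g x.1‖ * ∏ j, ‖g (x.2 j)‖) :=
      Summable.mul_of_nonneg (f := fun i => ‖g i‖)
        (g := fun v : Fin k → η => ∏ j, ‖g (v j)‖) hg ihS (fun i => norm_nonneg _)
        (fun v => Finset.prod_nonneg (fun j _ => norm_nonneg _))
    have hS : Summable (fun v : Fin (k + 1) → η => ∏ j, ‖g (v j)‖) := by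
      rw [← e.summable_iff]
      exact hprod.congr (fun x => (hterm x).symm)
    have hf' : Summable (fun i => ‖(‖g i‖)‖) := by simpa only [norm_norm] using hg
    have hg' : Summable (fun v : Fin k → η => ‖∏ j, ‖g (v j)‖‖) := by
      have hh : ∀ v : Fin k → η, ‖∏ j, ‖g (v j)‖‖ = ∏ j, ‖g (v j)‖ := fun v => by
        rw [Real.norm_eq_abs,
          _root_.abs_of_nonneg (Finset.prod_nonneg fun j _ => norm_nonneg _)]
      rw [funext hh]
      exact ihS
    have hgC' : Summable (fun v : Fin k → η => ‖∏ j, g (v j)‖) := by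
      have hh : ∀ v : Fin k → η, ‖∏ j, g (v j)‖ = ∏ j, ‖g (v j)‖ := fun v => norm_prod _ _
      rw [funext hh]
      exact ihS
    refine ⟨hS, ?_, ?_⟩
    · rw [← e.tsum_eq (fun v : Fin (k + 1) → η => ∏ j, ‖g (v j)‖), tsum_congr hterm,
        ← tsum_mul_tsum_of_summable_norm hf' hg', pow_succ, ← ihR]
      ring
    · rw [← e.tsum_eq (fun v : Fin (k + 1) → η => ∏ j, g (v j)), tsum_congr htermC,
        ← tsum_mul_tsum_of_summable_norm hg hgC', pow_succ, ihC]
      ring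

end PowTsum

section ExpExpand

variable {η : Type*} [Countable η]

noncomputable def bS (a : η → ℝ) : (Σ k : ℕ, (Fin k → η)) → ℝ :=
  fun x => (Nat.factorial x.1 : ℝ)⁻¹ * ∏ j, a (x.2 j)

noncomputable def nuS (m : η → ℝ) : (Σ k : ℕ, (Fin k → η)) → ℝ :=
  fun x => ∑ j, m (x.2 j)

lemma bS_nonneg {a : η → ℝ} (ha : ∀ i, 0 ≤ a i) : ∀ x, 0 ≤ bS a x := by
  rintro ⟨k, v⟩
  exact mul_nonneg (by positivity) (Finset.prod_nonneg fun j _ => ha _)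

lemma prod_a_summable {a : η → ℝ} (ha : ∀ i, 0 ≤ a i) (hsa : Summable a) (k : ℕ) :
    Summable (fun v : Fin k → η => ∏ j, a (v j)) ∧
      (∑' v : Fin k → η, ∏ j, a (v j)) = (∑' i, a i) ^ k := by
  set g : η → ℂ := fun i => ((a i : ℝ) : ℂ) with hgdef
  have hnorm : ∀ i, ‖g i‖ = a i := by
    intro i
    rw [hgdef]
    simp only [Complex.norm_real, Real.norm_eq_abs, _root_.abs_of_nonneg (ha i)]
  have hg : Summable (fun i => ‖g i‖) := by
    rw [funext hnorm]; exact hsa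
  obtain ⟨h1, h2, -⟩ := pow_tsum g hg k
  have hrw : (fun v : Fin k → η => ∏ j, ‖g (v j)‖) = fun v : Fin k → η => ∏ j, a (v j) := by
    funext v
    exact Finset.prod_congr rfl fun j _ => hnorm (v j)
  rw [hrw] at h1 h2
  rw [funext hnorm] at h2
  exact ⟨h1, h2⟩

lemma bS_summable {a : η → ℝ} (ha : ∀ i, 0 ≤ a i) (hsa : Summable a) : Summable (bS a) := by
  rw [summable_sigma_of_nonneg (bS_nonneg ha)]
  constructor
  · intro k
    have h := ((prod_a_summable ha hsa k).1).mul_left ((Nat.factorial k : ℝ)⁻¹)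
    exact h
  · have hev : (fun k : ℕ => ∑' v : Fin k → η, bS a ⟨k, v⟩) =
        fun k : ℕ => (∑' i, a i) ^ k / (Nat.factorial k : ℝ) := by
      funext k
      rw [show (fun v : Fin k → η => bS a ⟨k, v⟩) =
        (fun v : Fin k → η => (Nat.factorial k : ℝ)⁻¹ * ∏ j, a (v j)) from rfl, tsum_mul_left,
        (prod_a_summable ha hsa k).2]
      rw [inv_mul_eq_div]
    rw [hev]
    exact Real.summable_pow_div_factorial _

lemma exp_expand {a m : η → ℝ} (ha : ∀ i, 0 ≤ a i) (hsa : Summable a) (θ : ℝ) :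
    Complex.exp (∑' i, (a i : ℂ) * Complex.exp ((-(θ * m i) : ℝ) * Complex.I)) =
      Fc (bS a) (nuS m) θ := by
  set g : η → ℂ := fun i => (a i : ℂ) * Complex.exp ((-(θ * m i) : ℝ) * Complex.I) with hgdef
  have hnorm : ∀ i, ‖g i‖ = a i := norm_term (b := a) (ν := m) ha θ
  have hg : Summable (fun i => ‖g i‖) := by rw [funext hnorm]; exact hsa
  -- the term of the sigma series
  set F : (Σ k : ℕ, (Fin k → η)) → ℂ :=
    fun x => ((bS a x : ℝ) : ℂ) * Complex.exp ((-(θ * nuS m x) : ℝ) * Complex.I) with hF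
  have hFnorm : ∀ x, ‖F x‖ = bS a x := norm_term (b := bS a) (ν := nuS m) (bS_nonneg ha)  θ
  have hFsum : Summable F := by
    apply Summable.of_norm
    rw [funext hFnorm]
    exact bS_summable ha hsa
  -- product formula
  have hprodterm : ∀ (k : ℕ) (v : Fin k → η), (∏ j, g (v j)) = F ⟨k, v⟩ * (Nat.factorial k : ℂ) := by
    intro k v
    rw [hF]
    simp only []
    rw [hgdef]
    simp only []
    rw [Finset.prod_mul_distrib, ← Complex.exp_sum]
    have e1 : (∑ j : Fin k, ((-(θ * m (v j)) : ℝ) : ℂ) * Complex.I) =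
        ((-(θ * nuS m ⟨k, v⟩) : ℝ) : ℂ) * Complex.I := by
      rw [← Finset.sum_mul]
      congr 1
      rw [← Complex.ofReal_sum]
      congr 1
      rw [nuS]
      simp only []
      rw [Finset.mul_sum, ← Finset.sum_neg_distrib]
    rw [e1]
    have e2 : (∏ j : Fin k, ((a (v j) : ℝ) : ℂ)) = ((∏ j : Fin k, a (v j) : ℝ) : ℂ) := by
      push_cast
      rfl
    rw [e2, bS]
    have hk : ((Nat.factorial k : ℕ) : ℂ) ≠ 0 :=
      Nat.cast_ne_zero.mpr (Nat.factorial_ne_zero k)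
    push_cast
    push_cast at hk
    field_simp
  -- expansion of exp
  rw [show (∑' i, (a i : ℂ) * Complex.exp ((-(θ * m i) : ℝ) * Complex.I)) = ∑' i, g i from rfl]
  rw [Complex.exp_eq_exp_ℂ, NormedSpace.exp_eq_tsum ℂ]
  have hinner : ∀ k : ℕ, ((Nat.factorial k : ℂ))⁻¹ • (∑' i, g i) ^ k = ∑' v : Fin k → η, F ⟨k, v⟩ := by
    intro k
    rw [smul_eq_mul, (pow_tsum g hg k).2.2]
    rw [← tsum_mul_left]
    congr 1
    funext v
    rw [hprodterm k v]
    have hk : ((Nat.factorial k : ℕ) : ℂ) ≠ 0 :=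
      Nat.cast_ne_zero.mpr (Nat.factorial_ne_zero k)
    rw [mul_comm (F ⟨k, v⟩), ← mul_assoc, inv_mul_cancel₀ hk, one_mul]
  have houter : (fun k : ℕ => ((Nat.factorial k : ℂ))⁻¹ • (∑' i, g i) ^ k) =
      fun k : ℕ => ∑' v : Fin k → η, F ⟨k, v⟩ := funext hinner
  show (∑' k : ℕ, ((Nat.factorial k : ℂ))⁻¹ • (∑' i, g i) ^ k) = _
  rw [houter, ← hFsum.tsum_sigma' (fun k => hFsum.sigma_factor k)]
  rfl
end ExpExpand


section Zeta

noncomputable def c0 (σ : ℝ) : Nat.Primes × ℕ → ℝ :=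
  fun q => ((q.1 : ℕ) : ℝ) ^ (-σ * ((q.2 : ℝ) + 1)) / ((q.2 : ℝ) + 1)

noncomputable def muf : Nat.Primes × ℕ → ℝ :=
  fun q => ((q.2 : ℝ) + 1) * Real.log ((q.1 : ℕ) : ℝ)

lemma c0_nonneg (σ : ℝ) : ∀ q, 0 ≤ c0 σ q := by
  intro q
  rw [c0]
  positivity

lemma c0_summable {σ : ℝ} (hσ : 1 < σ) : Summable (c0 σ) := by
  have hb : ∀ q : Nat.Primes × ℕ,
      c0 σ q ≤ ((q.1 : ℕ) : ℝ) ^ (-σ) * (((2 : ℝ) ^ (-σ)) ^ (q.2)) := by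
    rintro ⟨p, k⟩
    have hp2 : (2 : ℝ) ≤ ((p : ℕ) : ℝ) := by exact_mod_cast p.prop.two_le
    have hp0 : (0 : ℝ) < ((p : ℕ) : ℝ) := by linarith
    have h1 : ((p : ℕ) : ℝ) ^ (-σ * ((k : ℝ) + 1)) = (((p : ℕ) : ℝ) ^ (-σ)) ^ (k + 1) := by
      rw [← Real.rpow_natCast (((p : ℕ) : ℝ) ^ (-σ)) (k + 1), ← Real.rpow_mul hp0.le]
      congr 1
      push_cast
      ring
    have h2 : ((p : ℕ) : ℝ) ^ (-σ) ≤ (2 : ℝ) ^ (-σ) :=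
      Real.rpow_le_rpow_of_nonpos zero_lt_two hp2 (by linarith)
    have h3 : (0 : ℝ) ≤ ((p : ℕ) : ℝ) ^ (-σ) := Real.rpow_nonneg hp0.le _
    have h4 : (((p : ℕ) : ℝ) ^ (-σ)) ^ (k + 1) ≤
        ((p : ℕ) : ℝ) ^ (-σ) * (((2 : ℝ) ^ (-σ)) ^ k) := by
      rw [pow_succ']
      apply mul_le_mul_of_nonneg_left _ h3
      exact pow_le_pow_left₀ h3 h2 k
    have h5 : c0 σ (p, k) ≤ ((p : ℕ) : ℝ) ^ (-σ * ((k : ℝ) + 1)) := by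
      rw [c0]
      apply div_le_self (Real.rpow_nonneg hp0.le _)
      have : (0:ℝ) ≤ (k : ℝ) := Nat.cast_nonneg k
      linarith
    calc c0 σ (p, k) ≤ ((p : ℕ) : ℝ) ^ (-σ * ((k : ℝ) + 1)) := h5
      _ = (((p : ℕ) : ℝ) ^ (-σ)) ^ (k + 1) := h1
      _ ≤ ((p : ℕ) : ℝ) ^ (-σ) * (((2 : ℝ) ^ (-σ)) ^ k) := h4
  apply Summable.of_nonneg_of_le (c0_nonneg σ) hb
  apply Summable.mul_of_nonneg (f := fun p : Nat.Primes => ((p : ℕ) : ℝ) ^ (-σ))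
    (g := fun k : ℕ => ((2 : ℝ) ^ (-σ)) ^ k)
  · exact Nat.Primes.summable_rpow.mpr (by linarith)
  · exact summable_geometric_of_lt_one (Real.rpow_nonneg zero_le_two _)
      (Real.rpow_lt_one_of_one_lt_of_neg one_lt_two (by linarith))
  · intro p
    exact Real.rpow_nonneg (Nat.cast_nonneg _) _
  · intro k
    exact pow_nonneg (Real.rpow_nonneg zero_le_two _) _

lemma zeta_exp_rep {σ : ℝ} (hσ : 1 < σ) (θ : ℝ) :
    riemannZeta ((σ : ℂ) + (θ : ℝ) * Complex.I) =
      Complex.exp (∑' q : Nat.Primes × ℕ,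
        (c0 σ q : ℂ) * Complex.exp ((-(θ * muf q) : ℝ) * Complex.I)) := by
  set s : ℂ := (σ : ℂ) + (θ : ℝ) * Complex.I with hs
  have hre : s.re = σ := by simp [hs]
  have hs1 : 1 < s.re := by rw [hre]; exact hσ
  rw [← riemannZeta_eulerProduct_exp_log hs1]
  congr 1
  -- term description
  set t : Nat.Primes × ℕ → ℂ :=
    fun q => (c0 σ q : ℂ) * Complex.exp ((-(θ * muf q) : ℝ) * Complex.I) with ht
  have htnorm : ∀ q, ‖t q‖ = c0 σ q := norm_term (b := c0 σ) (ν := muf) (c0_nonneg σ) θ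
  have htsummable : Summable t := by
    apply Summable.of_norm
    rw [funext htnorm]
    exact c0_summable hσ
  -- pointwise: the geometric-log series per prime
  have hper : ∀ p : Nat.Primes, HasSum (fun k : ℕ => t (p, k))
      (-Complex.log (1 - ((p : ℕ) : ℂ) ^ (-s))) := by
    intro p
    have hp2 : (2 : ℝ) ≤ ((p : ℕ) : ℝ) := by exact_mod_cast p.prop.two_le
    have hp0 : (0 : ℕ) < (p : ℕ) := p.prop.pos
    have hz : ‖((p : ℕ) : ℂ) ^ (-s)‖ < 1 := by
      rw [norm_natCast_cpow_of_pos hp0]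
      have : (-s).re = -σ := by simp [hs]
      rw [this]
      calc ((p : ℕ) : ℝ) ^ (-σ) ≤ (2 : ℝ) ^ (-σ) :=
            Real.rpow_le_rpow_of_nonpos zero_lt_two hp2 (by linarith)
        _ < 1 := Real.rpow_lt_one_of_one_lt_of_neg one_lt_two (by linarith)
    have hts := Complex.hasSum_taylorSeries_neg_log hz
    have h0 := (hasSum_nat_add_iff' (f := fun n : ℕ =>
      (((p : ℕ) : ℂ) ^ (-s)) ^ n / (n : ℂ)) 1).mpr hts
    simp only [Finset.range_one, Finset.sum_singleton, pow_zero, Nat.cast_zero] at h0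
    have hzero : (1 : ℂ) / (0 : ℂ) = 0 := by simp
    rw [hzero, sub_zero] at h0
    -- now rewrite the terms
    refine h0.congr_fun (fun k => ?_)
    rw [ht]
    simp only []
    -- t (p,k) = z^{k+1}/(k+1)
    have hpne : ((p : ℕ) : ℂ) ≠ 0 := by
      exact_mod_cast Nat.cast_ne_zero.mpr hp0.ne'
    have hlog : Complex.log ((p : ℕ) : ℂ) = (Real.log ((p : ℕ) : ℝ) : ℂ) := by
      rw [show ((p : ℕ) : ℂ) = (((p : ℕ) : ℝ) : ℂ) from by push_cast; rfl,
        Complex.ofReal_log (Nat.cast_nonneg _)]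
    have hcpow : ((p : ℕ) : ℂ) ^ (-s) = Complex.exp ((Real.log ((p : ℕ) : ℝ) : ℂ) * (-s)) := by
      rw [Complex.cpow_def_of_ne_zero hpne, hlog]
    have hpow : (((p : ℕ) : ℂ) ^ (-s)) ^ (k + 1) =
        Complex.exp (((k : ℂ) + 1) * ((Real.log ((p : ℕ) : ℝ) : ℂ) * (-s))) := by
      rw [hcpow, ← Complex.exp_nat_mul]
      congr 1
      push_cast
      ring
    have hsplit : (((k : ℂ) + 1) * ((Real.log ((p : ℕ) : ℝ) : ℂ) * (-s))) =
        ((-σ * ((k : ℝ) + 1) * Real.log ((p : ℕ) : ℝ) : ℝ) : ℂ) +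
          ((-(θ * muf (p, k)) : ℝ) : ℂ) * Complex.I := by
      rw [hs, muf]
      push_cast
      ring
    rw [hpow, hsplit, Complex.exp_add]
    have hreal : Complex.exp ((( -σ * ((k : ℝ) + 1) * Real.log ((p : ℕ) : ℝ) : ℝ) : ℂ)) =
        ((((p : ℕ) : ℝ) ^ (-σ * ((k : ℝ) + 1)) : ℝ) : ℂ) := by
      rw [← Complex.ofReal_exp]
      congr 1
      rw [Real.rpow_def_of_pos (by exact_mod_cast hp0)]
      congr 1
      ring
    rw [hreal, c0]
    have hk1 : ((k : ℂ) + 1) ≠ 0 := Nat.cast_add_one_ne_zero k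
    push_cast
    field_simp
  rw [htsummable.tsum_prod' (fun p => (hper p).summable)]
  congr 1
  funext p
  exact ((hper p).tsum_eq).symm

end Zeta

section Final

noncomputable def cP (σ p : ℝ) : Nat.Primes × ℕ → ℝ := fun q => (p / 2) * c0 σ q

lemma cP_nonneg {σ p : ℝ} (hp : 0 ≤ p) : ∀ q, 0 ≤ cP σ p q :=
  fun q => mul_nonneg (by linarith) (c0_nonneg σ q)

lemma cP_summable {σ p : ℝ} (hσ : 1 < σ) : Summable (cP σ p) :=
  (c0_summable hσ).mul_left _

lemma zeta_norm_eq_fsq {σ p : ℝ} (hσ : 1 < σ) (hp : 0 ≤ p) (θ : ℝ) :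
    ‖riemannZeta ((σ : ℂ) + (θ : ℝ) * Complex.I)‖ ^ p =
      fsq (bS (cP σ p)) (nuS muf) θ := by
  set L : ℂ := ∑' q : Nat.Primes × ℕ,
    (c0 σ q : ℂ) * Complex.exp ((-(θ * muf q) : ℝ) * Complex.I) with hL
  set G : ℂ := ∑' q : Nat.Primes × ℕ,
    (cP σ p q : ℂ) * Complex.exp ((-(θ * muf q) : ℝ) * Complex.I) with hG
  have hGL : G = ((p / 2 : ℝ) : ℂ) * L := by
    rw [hG, hL, ← tsum_mul_left]
    congr 1
    funext q
    rw [cP]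
    push_cast
    ring
  -- LHS
  have hzeta : riemannZeta ((σ : ℂ) + (θ : ℝ) * Complex.I) = Complex.exp L :=
    zeta_exp_rep hσ θ
  have hlhs : ‖riemannZeta ((σ : ℂ) + (θ : ℝ) * Complex.I)‖ ^ p = Real.exp (L.re * p) := by
    rw [hzeta, Complex.norm_exp,
      Real.rpow_def_of_pos (Real.exp_pos _), Real.log_exp]
  -- RHS
  have hFc : Fc (bS (cP σ p)) (nuS muf) θ = Complex.exp G :=
    (exp_expand (cP_nonneg hp) (cP_summable hσ) θ).symm
  have hrhs : fsq (bS (cP σ p)) (nuS muf) θ = Real.exp (L.re * p) := by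
    rw [fsq, hFc, Complex.norm_exp, sq, ← Real.exp_add, hGL,
      Complex.re_ofReal_mul]
    congr 1
    ring
  rw [hlhs, hrhs]

end Final

end Stmt5

open Stmt5 in
theorem stmt_5 (σ : ℝ) (hσ : 1 < σ) (p : ℝ) (hp : 0 ≤ p) (δ : ℝ) (hδ : 0 < δ) :
    (⨆ T : ℝ, ((∫ t in (-δ)..δ,
        ‖riemannZeta (σ + (T + t) * Complex.I)‖ ^ p * (δ - |t|) : ℝ) : EReal)) =
      ((∫ t in (-δ)..δ, ‖riemannZeta (σ + t * Complex.I)‖ ^ p * (δ - |t|) : ℝ) : EReal) ∧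
    Filter.limsup (fun T : ℝ => ((∫ t in (-δ)..δ,
        ‖riemannZeta (σ + (T + t) * Complex.I)‖ ^ p * (δ - |t|) : ℝ) : EReal)) Filter.atTop =
      ((∫ t in (-δ)..δ, ‖riemannZeta (σ + t * Complex.I)‖ ^ p * (δ - |t|) : ℝ) : EReal) := by
  set b := bS (cP σ p) with hbdef
  set ν := nuS muf with hνdef
  have hb : ∀ x, 0 ≤ b x := bS_nonneg (cP_nonneg hp)
  have hsb : Summable b := bS_summable (cP_nonneg hp) (cP_summable hσ)
  have key2 : ∀ T : ℝ, (∫ t in (-δ)..δ,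
      ‖riemannZeta (σ + (T + t) * Complex.I)‖ ^ p * (δ - |t|) : ℝ) = Iv b ν δ T := by
    intro T
    rw [Iv]
    apply intervalIntegral.integral_congr
    intro t _
    show ‖riemannZeta (σ + (T + t) * Complex.I)‖ ^ p * (δ - |t|) = fsq b ν (T + t) * (δ - |t|)
    rw [show ((σ : ℂ) + ((T : ℂ) + (t : ℂ)) * Complex.I) =
      ((σ : ℂ) + ((T + t : ℝ) : ℂ) * Complex.I) from by push_cast; ring]
    rw [zeta_norm_eq_fsq hσ hp (T + t)]
  have key0 : (∫ t in (-δ)..δ,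
      ‖riemannZeta (σ + t * Complex.I)‖ ^ p * (δ - |t|) : ℝ) = Iv b ν δ 0 := by
    rw [Iv]
    apply intervalIntegral.integral_congr
    intro t _
    show ‖riemannZeta (σ + t * Complex.I)‖ ^ p * (δ - |t|) = fsq b ν (0 + t) * (δ - |t|)
    rw [zero_add, zeta_norm_eq_fsq hσ hp t]
  obtain ⟨hsup, hlimsup⟩ := abstract_conclusion (b := b) (ν := ν) hb hsb hδ
  constructor
  · rw [key0]
    rw [show (fun T : ℝ => ((∫ t in (-δ)..δ,
        ‖riemannZeta (σ + (T + t) * Complex.I)‖ ^ p * (δ - |t|) : ℝ) : EReal)) =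
      (fun T : ℝ => ((Iv b ν δ T : ℝ) : EReal)) from funext (fun T => by rw [key2 T])]
    exact hsup
  · rw [key0]
    rw [show (fun T : ℝ => ((∫ t in (-δ)..δ,
        ‖riemannZeta (σ + (T + t) * Complex.I)‖ ^ p * (δ - |t|) : ℝ) : EReal)) =
      (fun T : ℝ => ((Iv b ν δ T : ℝ) : EReal)) from funext (fun T => by rw [key2 T])]
    exact hlimsup
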